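/- Let p ≥ 5 be prime, O a complete DVR with uniformizer π and ramification index e ≥ 4 over ℤ_p, Γ = O ⊗ ℤ_p[ζ_p], x₁ = λ^(p-2)/π, x₂ = λ^(p-2)/π². Then T = Γ + x₁O + x₂O is an O-subalgebra of the total fraction ring of Γ, and π²T ⊆ Γ ⊆ T. -/

import Mathlib

/-- Let `p ≥ 5` be prime, `O` a complete DVR with uniformizer `π` and
ramification index `e ≥ 4` over `ℤ_p` (so `π^4 ∣ p`), `Γ = O ⊗ ℤ_p[ζ_p]` (free over `O`
with basis `λ^i`, `0 ≤ i ≤ p-2`, where `λ^(p-1) = -p`), `x₁ = λ^(p-2)/π`,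
`x₂ = λ^(p-2)/π²`. Then `T = Γ + x₁O + x₂O` is an `O`-subalgebra of the total
fraction ring of `Γ` (i.e. it is closed under multiplication), and `π²T ⊆ Γ ⊆ T`. -/
theorem stmt_6 (p : ℕ) (hp : p.Prime) (hp5 : 5 ≤ p)
    (O : Type) [CommRing O] [IsDomain O] [IsDiscreteValuationRing O] [CharZero O]
    [IsAdicComplete (IsLocalRing.maximalIdeal O) O]
    (π : O) (hπ : Irreducible π) (he : π ^ 4 ∣ (p : O))
    (Γ : Type) [CommRing Γ] [Algebra O Γ]
    (lam : Γ) (hlam : lam ^ (p - 1) = -(p : Γ))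
    (b : Module.Basis (Fin (p - 1)) O Γ) (hb : ∀ i : Fin (p - 1), b i = lam ^ (i : ℕ))
    (hπΓ : algebraMap O Γ π ∈ nonZeroDivisors Γ)
    (x₁ x₂ : FractionRing Γ)
    (hx₁ : x₁ * algebraMap Γ (FractionRing Γ) (algebraMap O Γ π)
        = algebraMap Γ (FractionRing Γ) (lam ^ (p - 2)))
    (hx₂ : x₂ * algebraMap Γ (FractionRing Γ) (algebraMap O Γ (π ^ 2))
        = algebraMap Γ (FractionRing Γ) (lam ^ (p - 2)))
    (T : Set (FractionRing Γ))
    (hT : T = {y | ∃ (g : Γ) (o₁ o₂ : O),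
        y = algebraMap Γ (FractionRing Γ) g
          + x₁ * algebraMap Γ (FractionRing Γ) (algebraMap O Γ o₁)
          + x₂ * algebraMap Γ (FractionRing Γ) (algebraMap O Γ o₂)}) :
    (∀ a ∈ T, ∀ c ∈ T, a * c ∈ T) ∧
    (∀ t ∈ T, algebraMap Γ (FractionRing Γ) (algebraMap O Γ (π ^ 2)) * t
        ∈ Set.range (algebraMap Γ (FractionRing Γ))) ∧
    Set.range (algebraMap Γ (FractionRing Γ)) ⊆ T := by
  obtain ⟨u, hu⟩ := he
  have hπunit : IsUnit (algebraMap Γ (FractionRing Γ) (algebraMap O Γ π)) :=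
    IsLocalization.map_units (M := nonZeroDivisors Γ) (FractionRing Γ) ⟨_, hπΓ⟩
  have hπ2unit : IsUnit ((algebraMap Γ (FractionRing Γ) (algebraMap O Γ π)) ^ 2) :=
    hπunit.pow 2
  -- push maps in hx₂
  simp only [map_pow] at hx₁ hx₂
  have hpΓ : ((p : ℕ) : Γ) = algebraMap O Γ (π ^ 4 * u) := by
    rw [← hu, map_natCast]
  have kΓ1 : lam * lam ^ (p - 2) = algebraMap O Γ (-(π ^ 4 * u)) := by
    rw [← pow_succ', show p - 2 + 1 = p - 1 by omega, hlam, map_neg, ← hpΓ]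
  have kΓ2 : lam ^ (p - 2) * lam ^ (p - 2)
      = algebraMap O Γ (-(π ^ 4 * u)) * lam ^ (p - 3) := by
    rw [← pow_add, show p - 2 + (p - 2) = (p - 1) + (p - 3) by omega, pow_add, hlam,
      map_neg, ← hpΓ]
  have kF1 : algebraMap Γ (FractionRing Γ) lam
        * (algebraMap Γ (FractionRing Γ) lam) ^ (p - 2)
      = -((algebraMap Γ (FractionRing Γ) (algebraMap O Γ π)) ^ 4
          * algebraMap Γ (FractionRing Γ) (algebraMap O Γ u)) := by
    have h := congrArg (algebraMap Γ (FractionRing Γ)) kΓ1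
    simpa only [map_mul, map_pow, map_neg] using h
  have kF2 : (algebraMap Γ (FractionRing Γ) lam) ^ (p - 2)
        * (algebraMap Γ (FractionRing Γ) lam) ^ (p - 2)
      = -((algebraMap Γ (FractionRing Γ) (algebraMap O Γ π)) ^ 4
          * algebraMap Γ (FractionRing Γ) (algebraMap O Γ u))
        * (algebraMap Γ (FractionRing Γ) lam) ^ (p - 3) := by
    have h := congrArg (algebraMap Γ (FractionRing Γ)) kΓ2
    simpa only [map_mul, map_pow, map_neg] using h
  have h1 : algebraMap Γ (FractionRing Γ) lam * x₁
      = -((algebraMap Γ (FractionRing Γ) (algebraMap O Γ π)) ^ 3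
          * algebraMap Γ (FractionRing Γ) (algebraMap O Γ u)) := by
    apply hπunit.mul_right_cancel
    linear_combination (algebraMap Γ (FractionRing Γ) lam) * hx₁ + kF1
  have h2 : algebraMap Γ (FractionRing Γ) lam * x₂
      = -((algebraMap Γ (FractionRing Γ) (algebraMap O Γ π)) ^ 2
          * algebraMap Γ (FractionRing Γ) (algebraMap O Γ u)) := by
    apply hπ2unit.mul_right_cancel
    linear_combination (algebraMap Γ (FractionRing Γ) lam) * hx₂ + kF1
  have h3 : x₁ * x₁
      = (algebraMap Γ (FractionRing Γ) lam) ^ (p - 3)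
        * -((algebraMap Γ (FractionRing Γ) (algebraMap O Γ π)) ^ 2
            * algebraMap Γ (FractionRing Γ) (algebraMap O Γ u)) := by
    apply hπunit.mul_right_cancel
    apply hπunit.mul_right_cancel
    linear_combination (x₁ * algebraMap Γ (FractionRing Γ) (algebraMap O Γ π)
      + (algebraMap Γ (FractionRing Γ) lam) ^ (p - 2)) * hx₁ + kF2
  have h4 : x₁ * x₂
      = (algebraMap Γ (FractionRing Γ) lam) ^ (p - 3)
        * -((algebraMap Γ (FractionRing Γ) (algebraMap O Γ π))
            * algebraMap Γ (FractionRing Γ) (algebraMap O Γ u)) := by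
    apply hπunit.mul_right_cancel
    apply hπ2unit.mul_right_cancel
    linear_combination (x₂ * (algebraMap Γ (FractionRing Γ) (algebraMap O Γ π)) ^ 2) * hx₁
      + ((algebraMap Γ (FractionRing Γ) lam) ^ (p - 2)) * hx₂ + kF2
  have h5 : x₂ * x₂
      = (algebraMap Γ (FractionRing Γ) lam) ^ (p - 3)
        * -(algebraMap Γ (FractionRing Γ) (algebraMap O Γ u)) := by
    apply hπ2unit.mul_right_cancel
    apply hπ2unit.mul_right_cancel
    linear_combination (x₂ * (algebraMap Γ (FractionRing Γ) (algebraMap O Γ π)) ^ 2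
      + (algebraMap Γ (FractionRing Γ) lam) ^ (p - 2)) * hx₂ + kF2
  have hp1 : 0 < p - 1 := by omega
  have hdec : ∀ γ : Γ, ∃ (c : O) (δ : Γ), γ = algebraMap O Γ c + lam * δ := by
    intro γ
    refine ⟨b.repr γ ⟨0, hp1⟩,
      ∑ i ∈ Finset.univ.erase ⟨0, hp1⟩, b.repr γ i • lam ^ ((i : ℕ) - 1), ?_⟩
    conv_lhs => rw [← b.sum_repr γ]
    rw [← Finset.add_sum_erase _ _ (Finset.mem_univ ⟨0, hp1⟩), Finset.mul_sum]
    congr 1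
    · rw [hb]
      simp [Algebra.algebraMap_eq_smul_one]
    · refine Finset.sum_congr rfl fun i hi => ?_
      have hi0 : (i : ℕ) ≠ 0 := fun h => (Finset.mem_erase.mp hi).1 (Fin.ext h)
      rw [hb, mul_smul_comm, ← pow_succ', show (i : ℕ) - 1 + 1 = (i : ℕ) by omega]
  have hΓT : ∀ γ : Γ, algebraMap Γ (FractionRing Γ) γ ∈ T := by
    intro γ
    rw [hT]
    exact ⟨γ, 0, 0, by simp⟩
  have haddT : ∀ a ∈ T, ∀ c ∈ T, a + c ∈ T := by
    intro a ha c hc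
    rw [hT] at ha hc ⊢
    obtain ⟨g, o₁, o₂, rfl⟩ := ha
    obtain ⟨g', o₁', o₂', rfl⟩ := hc
    refine ⟨g + g', o₁ + o₁', o₂ + o₂', ?_⟩
    simp only [map_add]
    ring
  have hx1T : ∀ γ : Γ, x₁ * algebraMap Γ (FractionRing Γ) γ ∈ T := by
    intro γ
    obtain ⟨c, δ, rfl⟩ := hdec γ
    rw [hT]
    refine ⟨-(algebraMap O Γ (π ^ 3 * u)) * δ, c, 0, ?_⟩
    simp only [map_add, map_mul, map_neg, map_pow, map_zero, mul_zero, add_zero]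
    linear_combination (algebraMap Γ (FractionRing Γ) δ) * h1
  have hx2T : ∀ γ : Γ, x₂ * algebraMap Γ (FractionRing Γ) γ ∈ T := by
    intro γ
    obtain ⟨c, δ, rfl⟩ := hdec γ
    rw [hT]
    refine ⟨-(algebraMap O Γ (π ^ 2 * u)) * δ, 0, c, ?_⟩
    simp only [map_add, map_mul, map_neg, map_pow, map_zero, mul_zero, add_zero]
    linear_combination (algebraMap Γ (FractionRing Γ) δ) * h2
  refine ⟨?_, ?_, ?_⟩
  · intro a ha c hc
    rw [hT] at ha hc
    obtain ⟨g, o₁, o₂, rfl⟩ := ha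
    obtain ⟨g', o₁', o₂', rfl⟩ := hc
    have heq : (algebraMap Γ (FractionRing Γ) g
          + x₁ * algebraMap Γ (FractionRing Γ) (algebraMap O Γ o₁)
          + x₂ * algebraMap Γ (FractionRing Γ) (algebraMap O Γ o₂))
        * (algebraMap Γ (FractionRing Γ) g'
          + x₁ * algebraMap Γ (FractionRing Γ) (algebraMap O Γ o₁')
          + x₂ * algebraMap Γ (FractionRing Γ) (algebraMap O Γ o₂'))
      = algebraMap Γ (FractionRing Γ) (g * g')
        + x₁ * algebraMap Γ (FractionRing Γ)
            (algebraMap O Γ o₁ * g' + algebraMap O Γ o₁' * g)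
        + x₂ * algebraMap Γ (FractionRing Γ)
            (algebraMap O Γ o₂ * g' + algebraMap O Γ o₂' * g)
        + algebraMap Γ (FractionRing Γ) (lam ^ (p - 3)
            * algebraMap O Γ (-(π ^ 2 * u * (o₁ * o₁')) - π * u * (o₁ * o₂' + o₂ * o₁')
                - u * (o₂ * o₂'))) := by
      simp only [map_add, map_mul, map_sub, map_neg, map_pow]
      linear_combination
        (algebraMap Γ (FractionRing Γ) (algebraMap O Γ o₁)
          * algebraMap Γ (FractionRing Γ) (algebraMap O Γ o₁')) * h3
        + (algebraMap Γ (FractionRing Γ) (algebraMap O Γ o₁)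
            * algebraMap Γ (FractionRing Γ) (algebraMap O Γ o₂')
          + algebraMap Γ (FractionRing Γ) (algebraMap O Γ o₂)
            * algebraMap Γ (FractionRing Γ) (algebraMap O Γ o₁')) * h4
        + (algebraMap Γ (FractionRing Γ) (algebraMap O Γ o₂)
            * algebraMap Γ (FractionRing Γ) (algebraMap O Γ o₂')) * h5
    rw [heq]
    exact haddT _ (haddT _ (haddT _ (hΓT _) _ (hx1T _)) _ (hx2T _)) _ (hΓT _)
  · intro t ht
    rw [hT] at ht
    obtain ⟨g, o₁, o₂, rfl⟩ := ht
    refine ⟨algebraMap O Γ (π ^ 2) * g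
      + algebraMap O Γ π * lam ^ (p - 2) * algebraMap O Γ o₁
      + lam ^ (p - 2) * algebraMap O Γ o₂, ?_⟩
    simp only [map_add, map_mul, map_pow]
    linear_combination (-(algebraMap Γ (FractionRing Γ) (algebraMap O Γ π)
        * algebraMap Γ (FractionRing Γ) (algebraMap O Γ o₁))) * hx₁
      - (algebraMap Γ (FractionRing Γ) (algebraMap O Γ o₂)) * hx₂
  · rintro y ⟨g, rfl⟩
    exact hΓT g
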